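/- With M(p,q) = exp(−(‖p‖²+‖q‖²)/(4kT)) and Q(f) = ζ∇_p·(pf + 2kT∇_p f) + ζ∇_q·(qf + 2kT∇_q f), the function a(p,q) = −(1/ζ) p M (componentwise) satisfies Q(a_i) = p_i M for each component i. -/

import Mathlib

noncomputable section
open scoped RealInnerProductSpace
open MeasureTheory

abbrev E (d : ℕ) := EuclideanSpace ℝ (Fin d)

variable {d : ℕ}

/-- Gradient in the `p`-variable. -/
def gradP (f : E d × E d → ℝ) (x : E d × E d) : E d :=
  gradient (fun p => f (p, x.2)) x.1

/-- Gradient in the `q`-variable. -/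
def gradQ (f : E d × E d → ℝ) (x : E d × E d) : E d :=
  gradient (fun q => f (x.1, q)) x.2

/-- Divergence in the `p`-variable. -/
def divP (F : E d × E d → E d) (x : E d × E d) : ℝ :=
  ∑ i, fderiv ℝ (fun p => F (p, x.2) i) x.1 (EuclideanSpace.single i 1)

/-- Divergence in the `q`-variable. -/
def divQ (F : E d × E d → E d) (x : E d × E d) : ℝ :=
  ∑ i, fderiv ℝ (fun q => F (x.1, q) i) x.2 (EuclideanSpace.single i 1)

/-- The Fokker–Planck collision operator
`Q(f) = ζ ∇_p·(p f + 2kT ∇_p f) + ζ ∇_q·(q f + 2kT ∇_q f)`. -/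
def Qop (k T ζ : ℝ) (f : E d × E d → ℝ) (x : E d × E d) : ℝ :=
  ζ * divP (fun y => f y • y.1 + (2 * k * T) • gradP f y) x
    + ζ * divQ (fun y => f y • y.2 + (2 * k * T) • gradQ f y) x

/-- The Gaussian equilibrium `M(p,q) = exp(−(‖p‖²+‖q‖²)/(4kT))`. -/
def Mfun (k T : ℝ) (x : E d × E d) : ℝ :=
  Real.exp (-(‖x.1‖ ^ 2 + ‖x.2‖ ^ 2) / (4 * k * T))

/-- The conservative form `2ζkT ∇_{p,q}·(M ∇_{p,q}(f/M))`. -/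
def Qcons (k T ζ : ℝ) (f : E d × E d → ℝ) (x : E d × E d) : ℝ :=
  2 * ζ * k * T *
    (divP (fun y => Mfun k T y • gradP (fun z => f z / Mfun k T z) y) x
      + divQ (fun y => Mfun k T y • gradQ (fun z => f z / Mfun k T z) y) x)

lemma hasFDerivAt_normSq (p : E d) :
    HasFDerivAt (fun p : E d => ‖p‖ ^ 2) ((2:ℝ) • (innerSL ℝ p : E d →L[ℝ] ℝ)) p := by
  have h := (hasFDerivAt_id (𝕜 := ℝ) p).inner ℝ (hasFDerivAt_id p)
  have h2 : (fun t : E d => ⟪t, t⟫) = fun t : E d => ‖t‖ ^ 2 := by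
    funext t; rw [real_inner_self_eq_norm_sq]
  simp only [id] at h; rw [h2] at h
  refine h.congr_fderiv ?_
  ext v
  simp [real_inner_comm, mul_comm]
  ring

lemma hasFDerivAt_MP (k T : ℝ) (hk : k ≠ 0) (hT : T ≠ 0) (q p : E d) :
    HasFDerivAt (fun p : E d => Mfun k T (p, q))
      ((-(1/(2*k*T)) * Mfun k T (p, q)) • (innerSL ℝ p : E d →L[ℝ] ℝ)) p := by
  have h0 : HasFDerivAt (fun x : E d => -(‖x‖ ^ 2 + ‖q‖ ^ 2) / (4*k*T))
      ((-(1/(2*k*T))) • (innerSL ℝ p : E d →L[ℝ] ℝ)) p := by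
    have h := ((hasFDerivAt_normSq p).add_const (‖q‖^2)).neg.mul_const ((4*k*T)⁻¹)
    simp only [div_eq_mul_inv]
    refine h.congr_fderiv ?_
    ext v
    simp
    field_simp
    ring
  have h1 := h0.exp
  refine h1.congr_fderiv ?_
  ext v
  simp [Mfun]
  ring

lemma hasFDerivAt_MQ (k T : ℝ) (hk : k ≠ 0) (hT : T ≠ 0) (p q : E d) :
    HasFDerivAt (fun q : E d => Mfun k T (p, q))
      ((-(1/(2*k*T)) * Mfun k T (p, q)) • (innerSL ℝ q : E d →L[ℝ] ℝ)) q := by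
  have h0 : HasFDerivAt (fun x : E d => -(‖p‖ ^ 2 + ‖x‖ ^ 2) / (4*k*T))
      ((-(1/(2*k*T))) • (innerSL ℝ q : E d →L[ℝ] ℝ)) q := by
    have h := ((hasFDerivAt_normSq q).const_add (‖p‖^2)).neg.mul_const ((4*k*T)⁻¹)
    simp only [div_eq_mul_inv]
    refine h.congr_fderiv ?_
    ext v
    simp
    field_simp
    ring
  have h1 := h0.exp
  refine h1.congr_fderiv ?_
  ext v
  simp [Mfun]
  ring

lemma hasFDerivAt_proj (i : Fin d) (p : E d) :
    HasFDerivAt (fun p : E d => p i)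
      (innerSL ℝ (EuclideanSpace.single i (1:ℝ)) : E d →L[ℝ] ℝ) p := by
  have h := (EuclideanSpace.proj (𝕜 := ℝ) i).hasFDerivAt (x := p)
  have he : (innerSL ℝ (EuclideanSpace.single i (1:ℝ)) : E d →L[ℝ] ℝ)
      = EuclideanSpace.proj (𝕜 := ℝ) i := by
    ext v; simp [real_inner_comm, EuclideanSpace.inner_single_right]
  rw [he]
  exact h

lemma gradP_f (k T ζ : ℝ) (hk : k ≠ 0) (hT : T ≠ 0) (i : Fin d) (y : E d × E d) :
    gradP (fun y => -(1/ζ) * y.1 i * Mfun k T y) y =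
      (-(1/ζ) * Mfun k T y) • EuclideanSpace.single i (1:ℝ)
        + (-(1/ζ) * y.1 i * (-(1/(2*k*T)) * Mfun k T y)) • y.1 := by
  have hF := ((hasFDerivAt_proj i y.1).const_mul (-(1/ζ))).mul
      (hasFDerivAt_MP k T hk hT y.2 y.1)
  have hG : HasGradientAt (fun p : E d => -(1/ζ) * p i * Mfun k T (p, y.2))
      ((-(1/ζ) * Mfun k T y) • EuclideanSpace.single i (1:ℝ)
        + (-(1/ζ) * y.1 i * (-(1/(2*k*T)) * Mfun k T y)) • y.1) y.1 := by
    rw [hasGradientAt_iff_hasFDerivAt]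
    refine hF.congr_fderiv ?_
    ext w
    simp [inner_add_left, real_inner_smul_left, Mfun]
    ring
  exact hG.gradient

lemma gradQ_f (k T ζ : ℝ) (hk : k ≠ 0) (hT : T ≠ 0) (i : Fin d) (y : E d × E d) :
    gradQ (fun y => -(1/ζ) * y.1 i * Mfun k T y) y =
      (-(1/ζ) * y.1 i * (-(1/(2*k*T)) * Mfun k T y)) • y.2 := by
  have hF := (hasFDerivAt_MQ k T hk hT y.1 y.2).const_mul (-(1/ζ) * y.1 i)
  have hG : HasGradientAt (fun q : E d => -(1/ζ) * y.1 i * Mfun k T (y.1, q))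
      ((-(1/ζ) * y.1 i * (-(1/(2*k*T)) * Mfun k T y)) • y.2) y.2 := by
    rw [hasGradientAt_iff_hasFDerivAt]
    refine hF.congr_fderiv ?_
    ext w
    simp [real_inner_smul_left, Mfun]
    ring
  exact hG.gradient

lemma fieldP_eq (k T ζ : ℝ) (hk : k ≠ 0) (hT : T ≠ 0) (hζ : ζ ≠ 0) (i : Fin d) :
    (fun y : E d × E d => (-(1/ζ) * y.1 i * Mfun k T y) • y.1
        + (2*k*T) • gradP (fun y => -(1/ζ) * y.1 i * Mfun k T y) y)
      = fun y => (-(2*k*T/ζ) * Mfun k T y) • EuclideanSpace.single i (1:ℝ) := by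
  funext y
  rw [gradP_f k T ζ hk hT i y]
  ext j
  simp [smul_eq_mul]
  split_ifs <;> field_simp <;> ring

lemma fieldQ_eq (k T ζ : ℝ) (hk : k ≠ 0) (hT : T ≠ 0) (hζ : ζ ≠ 0) (i : Fin d) :
    (fun y : E d × E d => (-(1/ζ) * y.1 i * Mfun k T y) • y.2
        + (2*k*T) • gradQ (fun y => -(1/ζ) * y.1 i * Mfun k T y) y)
      = fun _ => (0 : E d) := by
  funext y
  rw [gradQ_f k T ζ hk hT i y]
  ext j
  simp [smul_eq_mul]
  field_simp
  ring

lemma divP_field (k T c : ℝ) (hk : k ≠ 0) (hT : T ≠ 0) (i : Fin d) (x : E d × E d) :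
    divP (fun y => (c * Mfun k T y) • EuclideanSpace.single i (1:ℝ)) x
      = c * (-(1/(2*k*T))) * Mfun k T x * x.1 i := by
  unfold divP
  have key : ∀ j : Fin d,
      fderiv ℝ (fun p : E d =>
          ((c * Mfun k T (p, x.2)) • EuclideanSpace.single i (1:ℝ) : E d) j)
        x.1 (EuclideanSpace.single j 1)
      = (EuclideanSpace.single i (1:ℝ) j) * (c * (-(1/(2*k*T))) * Mfun k T x * x.1 j) := by
    intro j
    have hj := ((hasFDerivAt_MP k T hk hT x.2 x.1).const_mul c).mul_const
      (EuclideanSpace.single i (1:ℝ) j)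
    have hfun : (fun p : E d =>
          ((c * Mfun k T (p, x.2)) • EuclideanSpace.single i (1:ℝ) : E d) j)
        = fun p : E d => (c * Mfun k T (p, x.2)) * (EuclideanSpace.single i (1:ℝ) j) := by
      funext p; simp [smul_eq_mul]
    rw [hfun, hj.fderiv]
    rcases eq_or_ne j i with rfl | h <;>
      simp [*, EuclideanSpace.single_apply, real_inner_smul_left, EuclideanSpace.inner_single_right] <;> ring
  simp only [key]
  simp [EuclideanSpace.single_apply]

lemma divQ_zero (x : E d × E d) : divQ (fun _ => (0 : E d)) x = 0 := by
  simp [divQ]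

theorem stmt15 (k T ζ : ℝ) (hk : 0 < k) (hT : 0 < T) (hζ : 0 < ζ)
    (i : Fin d) (x : E d × E d) :
    Qop k T ζ (fun y => -(1 / ζ) * y.1 i * Mfun k T y) x = x.1 i * Mfun k T x := by
  have hk' := hk.ne'
  have hT' := hT.ne'
  have hζ' := hζ.ne'
  unfold Qop
  rw [fieldP_eq k T ζ hk' hT' hζ' i, fieldQ_eq k T ζ hk' hT' hζ' i, divQ_zero,
    divP_field k T (-(2*k*T/ζ)) hk' hT' i x]
  field_simp
  ring
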